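/- Let β > 0 and y > 0. Then ∫_0^∞ T_t(x,y) t^{-1/2} dt ≤ C (x/y)^β for all 0 < x ≤ y/2, where T_t(x,y) = (xy)^{1/2}/(2t) I_{β-1/2}(xy/(2t)) exp(-(x²+y²)/(4t)) is the Bessel heat kernel and C depends only on β. -/

import Mathlib

open Real Set MeasureTheory

/-- Modified Bessel function of the first kind (series definition). -/
noncomputable def besselI (ν x : ℝ) : ℝ :=
  ∑' n : ℕ, (x/2) ^ ν * (x/2) ^ (2*n) / (Nat.factorial n * Real.Gamma (n + ν + 1))

/-- The Bessel heat kernel. -/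
noncomputable def TB (β t x y : ℝ) : ℝ :=
  (x*y) ^ ((1:ℝ)/2) / (2*t) * besselI (β - 1/2) (x*y/(2*t)) * Real.exp (-(x^2+y^2)/(4*t))

private lemma gamma_fact {ν : ℝ} (hν : -(1/2:ℝ) ≤ ν) (n : ℕ) :
    Real.Gamma (ν + 1) * (Nat.factorial (2*n) : ℝ) ≤
      4 ^ n * (Nat.factorial n : ℝ) * Real.Gamma ((n:ℝ) + ν + 1) := by
  induction n with
  | zero => simp
  | succ n ih =>
    have hn : (0:ℝ) ≤ (n:ℝ) := n.cast_nonneg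
    have hpos : (0:ℝ) < (n:ℝ) + ν + 1 := by linarith
    have hG0 : (0:ℝ) < Real.Gamma ((n:ℝ) + ν + 1) := Real.Gamma_pos_of_pos hpos
    have hcast : ((n+1 : ℕ):ℝ) + ν + 1 = ((n:ℝ) + ν + 1) + 1 := by push_cast; ring
    have hG : Real.Gamma (((n+1 : ℕ):ℝ) + ν + 1)
        = ((n:ℝ) + ν + 1) * Real.Gamma ((n:ℝ) + ν + 1) := by
      rw [hcast, Real.Gamma_add_one hpos.ne']
    have hfac2 : (Nat.factorial (2*(n+1)) : ℝ)
        = (2*(n:ℝ)+2) * ((2*(n:ℝ)+1) * (Nat.factorial (2*n) : ℝ)) := by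
      have : 2*(n+1) = (2*n+1) + 1 := by ring
      rw [this, Nat.factorial_succ, Nat.factorial_succ]
      push_cast; ring
    have hfac1 : (Nat.factorial (n+1) : ℝ) = ((n:ℝ)+1) * (Nat.factorial n : ℝ) := by
      rw [Nat.factorial_succ]; push_cast; ring
    rw [hG, hfac2, hfac1]
    have h4 : (0:ℝ) ≤ 4 ^ n * (Nat.factorial n : ℝ) := by positivity
    have key : (2*(n:ℝ)+2) * (2*(n:ℝ)+1) ≤ 4 * (((n:ℝ))+1) * ((n:ℝ) + ν + 1) := by nlinarith
    calc Real.Gamma (ν + 1) * ((2*(n:ℝ)+2) * ((2*(n:ℝ)+1) * (Nat.factorial (2*n) : ℝ)))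
        = (Real.Gamma (ν + 1) * (Nat.factorial (2*n) : ℝ)) * ((2*(n:ℝ)+2) * (2*(n:ℝ)+1)) := by
          ring
      _ ≤ (4 ^ n * (Nat.factorial n : ℝ) * Real.Gamma ((n:ℝ) + ν + 1))
            * ((2*(n:ℝ)+2) * (2*(n:ℝ)+1)) := by
          apply mul_le_mul_of_nonneg_right ih; positivity
      _ ≤ (4 ^ n * (Nat.factorial n : ℝ) * Real.Gamma ((n:ℝ) + ν + 1))
            * (4 * (((n:ℝ))+1) * ((n:ℝ) + ν + 1)) := by
          apply mul_le_mul_of_nonneg_left key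
          positivity
      _ = 4 ^ (n+1) * (((n:ℝ)+1) * (Nat.factorial n : ℝ))
            * (((n:ℝ) + ν + 1) * Real.Gamma ((n:ℝ) + ν + 1)) := by ring

private lemma besselI_nonneg {ν u : ℝ} (hν : -(1/2:ℝ) < ν) (hu : 0 ≤ u) :
    0 ≤ besselI ν u := by
  refine tsum_nonneg fun n => ?_
  have hn : (0:ℝ) ≤ (n:ℝ) := n.cast_nonneg
  have hG0 : (0:ℝ) < Real.Gamma ((n:ℝ) + ν + 1) := Real.Gamma_pos_of_pos (by linarith)
  have h2 : (0:ℝ) ≤ (u/2) ^ ν := Real.rpow_nonneg (by linarith) _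
  have h3 : (0:ℝ) ≤ (u/2) ^ (2*n) := by positivity
  positivity

private lemma besselI_le {ν u : ℝ} (hν : -(1/2:ℝ) < ν) (hu : 0 < u) :
    besselI ν u ≤ (u/2) ^ ν * Real.exp u / Real.Gamma (ν + 1) := by
  have hΓ1 : (0:ℝ) < Real.Gamma (ν + 1) := Real.Gamma_pos_of_pos (by linarith)
  have ha : (0:ℝ) < u/2 := by linarith
  have haν : (0:ℝ) ≤ (u/2) ^ ν := Real.rpow_nonneg ha.le _
  have hinj : Function.Injective (fun n : ℕ => 2*n) := fun a b h => by
    dsimp at h; omega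
  have hsum_exp : Summable (fun k : ℕ => u^k / (Nat.factorial k : ℝ)) :=
    Real.summable_pow_div_factorial u
  have hsum_even : Summable (fun n : ℕ => u^(2*n) / (Nat.factorial (2*n) : ℝ)) := by
    exact hsum_exp.comp_injective hinj
  have hsum_g : Summable (fun n : ℕ =>
      ((u/2) ^ ν / Real.Gamma (ν + 1)) * (u^(2*n) / (Nat.factorial (2*n) : ℝ))) :=
    hsum_even.mul_left _
  have hle : ∀ n : ℕ,
      (u/2) ^ ν * (u/2) ^ (2*n) / (Nat.factorial n * Real.Gamma ((n:ℝ) + ν + 1)) ≤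
      ((u/2) ^ ν / Real.Gamma (ν + 1)) * (u^(2*n) / (Nat.factorial (2*n) : ℝ)) := by
    intro n
    have hn : (0:ℝ) ≤ (n:ℝ) := n.cast_nonneg
    have hGn : (0:ℝ) < Real.Gamma ((n:ℝ) + ν + 1) := Real.Gamma_pos_of_pos (by linarith)
    have hfacn : (0:ℝ) < (Nat.factorial n : ℝ) := by positivity
    have hfac2n : (0:ℝ) < (Nat.factorial (2*n) : ℝ) := by positivity
    have h4 : (0:ℝ) < (4:ℝ) ^ n := by positivity
    have expand : (u/2) ^ (2*n) = u^(2*n) / 4 ^ n := by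
      rw [div_pow]; congr 1; rw [pow_mul]; norm_num
    rw [div_mul_div_comm, div_le_div_iff₀ (by positivity) (by positivity)]
    have hfact := gamma_fact hν.le n
    calc (u/2) ^ ν * (u/2) ^ (2*n) * (Real.Gamma (ν + 1) * (Nat.factorial (2*n) : ℝ))
        = ((u/2) ^ ν * u^(2*n) / 4 ^ n) * (Real.Gamma (ν + 1) * (Nat.factorial (2*n) : ℝ)) := by
          rw [expand]; ring
      _ ≤ ((u/2) ^ ν * u^(2*n) / 4 ^ n)
            * (4 ^ n * (Nat.factorial n : ℝ) * Real.Gamma ((n:ℝ) + ν + 1)) := by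
          apply mul_le_mul_of_nonneg_left hfact; positivity
      _ = (u/2) ^ ν * u^(2*n) * ((Nat.factorial n) * Real.Gamma ((n:ℝ) + ν + 1)) := by
          field_simp
  have hsum_f : Summable (fun n : ℕ =>
      (u/2) ^ ν * (u/2) ^ (2*n) / (Nat.factorial n * Real.Gamma ((n:ℝ) + ν + 1))) := by
    refine Summable.of_nonneg_of_le (fun n => ?_) hle hsum_g
    have hn : (0:ℝ) ≤ (n:ℝ) := n.cast_nonneg
    have hGn : (0:ℝ) < Real.Gamma ((n:ℝ) + ν + 1) := Real.Gamma_pos_of_pos (by linarith)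
    positivity
  have h1 : besselI ν u ≤ ∑' n : ℕ,
      ((u/2) ^ ν / Real.Gamma (ν + 1)) * (u^(2*n) / (Nat.factorial (2*n) : ℝ)) := by
    unfold besselI
    exact hsum_f.tsum_le_tsum hle hsum_g
  have h2 : (∑' n : ℕ, u^(2*n) / (Nat.factorial (2*n) : ℝ)) ≤ Real.exp u := by
    have hexp : Real.exp u = ∑' k : ℕ, u^k / (Nat.factorial k : ℝ) := by
      rw [Real.exp_eq_exp_ℝ, NormedSpace.exp_eq_tsum_div]
    rw [hexp]
    exact hsum_even.tsum_le_tsum_of_inj (fun n : ℕ => 2*n) hinj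
      (fun c _ => by positivity) (fun n => le_rfl) hsum_exp
  calc besselI ν u ≤ ∑' n : ℕ,
        ((u/2) ^ ν / Real.Gamma (ν + 1)) * (u^(2*n) / (Nat.factorial (2*n) : ℝ)) := h1
    _ = ((u/2) ^ ν / Real.Gamma (ν + 1)) * ∑' n : ℕ, u^(2*n) / (Nat.factorial (2*n) : ℝ) :=
        tsum_mul_left
    _ ≤ ((u/2) ^ ν / Real.Gamma (ν + 1)) * Real.exp u := by
        apply mul_le_mul_of_nonneg_left h2; positivity
    _ = (u/2) ^ ν * Real.exp u / Real.Gamma (ν + 1) := by ring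

private lemma subst_eq {b c : ℝ} (hc : 0 < c) {x : ℝ} (hx : x ∈ Ioi (0:ℝ)) :
    (|(-1:ℝ)| * x ^ ((-1:ℝ) - 1)) •
      ((x ^ (-1:ℝ)) ^ (b-1) * Real.exp (-(c * x ^ (-1:ℝ))))
    = x ^ (-b-1) * Real.exp (-(c/x)) := by
  have hx0 : (0:ℝ) < x := hx
  have e1 : x ^ ((-1:ℝ)) = x⁻¹ := Real.rpow_neg_one x
  have e2 : (x⁻¹) ^ (b-1) = x ^ (-(b-1)) := by
    rw [Real.inv_rpow hx0.le]
    exact (Real.rpow_neg hx0.le _).symm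
  have e3 : c * x⁻¹ = c / x := (div_eq_mul_inv c x).symm
  rw [smul_eq_mul, abs_neg, abs_one, one_mul, e1, e2, e3, ← mul_assoc,
    ← Real.rpow_add hx0]
  norm_num
  congr 1
  ring

private lemma integrableOn_aux {b c : ℝ} (hb : 0 < b) (hc : 0 < c) :
    IntegrableOn (fun t : ℝ => t ^ (-b-1) * Real.exp (-(c/t))) (Ioi 0) := by
  have h1 : IntegrableOn (fun y : ℝ => y ^ (b-1) * Real.exp (-(c*y))) (Ioi 0) := by
    have := integrableOn_rpow_mul_exp_neg_mul_rpow (p := 1) (s := b-1) (b := c)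
      (by linarith) one_pos hc
    refine this.congr_fun (fun x hx => ?_) measurableSet_Ioi
    beta_reduce
    rw [Real.rpow_one, neg_mul]
  have h2 := (integrableOn_Ioi_comp_rpow_iff
    (fun y : ℝ => y ^ (b-1) * Real.exp (-(c*y))) (p := -1) (by norm_num)).mpr h1
  exact h2.congr_fun (fun x hx => subst_eq hc hx) measurableSet_Ioi

private lemma integral_aux {b c : ℝ} (hb : 0 < b) (hc : 0 < c) :
    ∫ t in Ioi (0:ℝ), t ^ (-b-1) * Real.exp (-(c/t)) = (1/c)^b * Real.Gamma b := by
  rw [← Real.integral_rpow_mul_exp_neg_mul_Ioi hb hc,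
    ← integral_comp_rpow_Ioi (fun y : ℝ => y ^ (b-1) * Real.exp (-(c*y))) (p := -1)
      (by norm_num)]
  exact (setIntegral_congr_fun measurableSet_Ioi (fun x hx => subst_eq hc hx)).symm

theorem bessel_time_integral_small_x (β : ℝ) (hβ : 0 < β) :
    ∃ C : ℝ, ∀ y : ℝ, 0 < y → ∀ x : ℝ, 0 < x → x ≤ y/2 →
      ∫ t in Ioi (0:ℝ), TB β t x y * t ^ (-(1:ℝ)/2) ≤ C * (x/y) ^ β := by
  obtain ⟨ν, hνdef⟩ : ∃ ν : ℝ, ν = β - 1/2 := ⟨_, rfl⟩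
  have hν : -(1/2:ℝ) < ν := by rw [hνdef]; linarith
  have hΓ1 : (0:ℝ) < Real.Gamma (ν+1) := Real.Gamma_pos_of_pos (by linarith)
  have hΓβ : (0:ℝ) < Real.Gamma β := Real.Gamma_pos_of_pos hβ
  refine ⟨(4:ℝ)^(-ν) / (2 * Real.Gamma (ν+1)) * (16^β * Real.Gamma β),
    fun y hy x hx hxy => ?_⟩
  have hxy0 : (0:ℝ) < x*y := mul_pos hx hy
  have hc : (0:ℝ) < y^2/16 := by positivity
  obtain ⟨K, hK⟩ : ∃ K : ℝ, K = (4:ℝ)^(-ν) / (2 * Real.Gamma (ν+1)) * (x*y)^β := ⟨_, rfl⟩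
  -- pointwise bound
  have hpt : ∀ t ∈ Ioi (0:ℝ), TB β t x y * t ^ (-(1:ℝ)/2) ≤
      K * (t ^ (-β-1) * Real.exp (-(y^2/16/t))) := by
    intro t ht
    have ht0 : (0:ℝ) < t := ht
    have hu : (0:ℝ) < x*y/(2*t) := by positivity
    have hbI := besselI_le hν hu
    have hexp : Real.exp (x*y/(2*t)) * Real.exp (-(x^2+y^2)/(4*t)) ≤
        Real.exp (-(y^2/16/t)) := by
      rw [← Real.exp_add]
      apply Real.exp_le_exp.mpr
      rw [neg_div]
      have h1 : x*y/(2*t) + y^2/16/t ≤ (x^2+y^2)/(4*t) := by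
        rw [div_add_div _ _ (by positivity) (by positivity),
          div_le_div_iff₀ (by positivity) (by positivity)]
        nlinarith [mul_nonneg (mul_nonneg (by linarith : (0:ℝ) ≤ y - 2*x)
          (by linarith : (0:ℝ) ≤ 3*y - 2*x)) (mul_pos ht0 ht0).le, mul_pos ht0 ht0]
      linarith
    calc TB β t x y * t ^ (-(1:ℝ)/2)
        = (x*y) ^ ((1:ℝ)/2) / (2*t) * besselI ν (x*y/(2*t)) *
            Real.exp (-(x^2+y^2)/(4*t)) * t ^ (-(1:ℝ)/2) := by rw [TB, ← hνdef]
      _ ≤ (x*y) ^ ((1:ℝ)/2) / (2*t) *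
            ((x*y/(2*t)/2) ^ ν * Real.exp (x*y/(2*t)) / Real.Gamma (ν+1)) *
            Real.exp (-(x^2+y^2)/(4*t)) * t ^ (-(1:ℝ)/2) := by
          gcongr
      _ = (x*y) ^ ((1:ℝ)/2) / (2*t) * ((x*y/(4*t)) ^ ν / Real.Gamma (ν+1)) *
            (Real.exp (x*y/(2*t)) * Real.exp (-(x^2+y^2)/(4*t))) * t ^ (-(1:ℝ)/2) := by
          rw [show x*y/(2*t)/2 = x*y/(4*t) by ring]; ring
      _ ≤ (x*y) ^ ((1:ℝ)/2) / (2*t) * ((x*y/(4*t)) ^ ν / Real.Gamma (ν+1)) *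
            Real.exp (-(y^2/16/t)) * t ^ (-(1:ℝ)/2) := by
          gcongr
      _ = K * (t ^ (-β-1) * Real.exp (-(y^2/16/t))) := by
          have e1 : (x*y/(4*t)) ^ ν = (x*y) ^ ν / ((4:ℝ)*t) ^ ν :=
            Real.div_rpow hxy0.le (by positivity) ν
          have e2 : ((4:ℝ)*t) ^ ν = (4:ℝ)^ν * t^ν := Real.mul_rpow (by norm_num) ht0.le
          have e3 : (x*y) ^ β = (x*y) ^ ((1:ℝ)/2) * (x*y) ^ ν := by
            rw [← Real.rpow_add hxy0]; congr 1; rw [hνdef]; ring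
          have e4 : t ^ (-β-1) = t ^ (-(1:ℝ)/2) * (t^ν * t)⁻¹ := by
            rw [show -β-1 = (-(1:ℝ)/2) + (-(ν+1)) by rw [hνdef]; ring,
              Real.rpow_add ht0, Real.rpow_neg ht0.le, Real.rpow_add ht0, Real.rpow_one]
          have e5 : (4:ℝ)^(-ν) = ((4:ℝ)^ν)⁻¹ := Real.rpow_neg (by norm_num) ν
          have p1 : (0:ℝ) < t^ν := Real.rpow_pos_of_pos ht0 ν
          have p2 : (0:ℝ) < (4:ℝ)^ν := Real.rpow_pos_of_pos (by norm_num) ν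
          rw [hK, e1, e2, e3, e4, e5]
          field_simp
  have hnonneg : ∀ t ∈ Ioi (0:ℝ), 0 ≤ TB β t x y * t ^ (-(1:ℝ)/2) := by
    intro t ht
    have ht0 : (0:ℝ) < t := ht
    have hbI : 0 ≤ besselI ν (x*y/(2*t)) := besselI_nonneg hν (by positivity)
    rw [TB, ← hνdef]
    have h1 : (0:ℝ) ≤ (x*y) ^ ((1:ℝ)/2) / (2*t) := by positivity
    have h2 : (0:ℝ) ≤ t ^ (-(1:ℝ)/2) := Real.rpow_nonneg ht0.le _
    positivity
  have hint : Integrable (fun t => K * (t ^ (-β-1) * Real.exp (-(y^2/16/t))))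
      (volume.restrict (Ioi 0)) := (integrableOn_aux hβ hc).const_mul K
  have hmono := integral_mono_of_nonneg
    ((ae_restrict_iff' measurableSet_Ioi).mpr (ae_of_all _ hnonneg))
    hint
    ((ae_restrict_iff' measurableSet_Ioi).mpr (ae_of_all _ hpt))
  calc ∫ t in Ioi (0:ℝ), TB β t x y * t ^ (-(1:ℝ)/2)
      ≤ ∫ t in Ioi (0:ℝ), K * (t ^ (-β-1) * Real.exp (-(y^2/16/t))) := hmono
    _ = K * ((1/(y^2/16))^β * Real.Gamma β) := by
        rw [integral_const_mul, integral_aux hβ hc]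
    _ = (4:ℝ)^(-ν) / (2 * Real.Gamma (ν+1)) * (16^β * Real.Gamma β) * (x/y) ^ β := by
        have f1 : (1:ℝ)/(y^2/16) = 16/y^2 := one_div_div _ _
        have f2 : (x*y) ^ β * ((16:ℝ)/y^2) ^ β = (16:ℝ)^β * (x/y) ^ β := by
          have hprod : (x*y) * ((16:ℝ)/y^2) = 16 * (x/y) := by
            field_simp
          rw [← Real.mul_rpow hxy0.le (by positivity), hprod,
            Real.mul_rpow (by norm_num) (by positivity)]
        rw [hK, f1]
        calc (4:ℝ)^(-ν) / (2 * Real.Gamma (ν+1)) * (x*y)^β * (((16:ℝ)/y^2)^β * Real.Gamma β)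
            = (4:ℝ)^(-ν) / (2 * Real.Gamma (ν+1)) *
                ((x*y)^β * ((16:ℝ)/y^2)^β) * Real.Gamma β := by ring
          _ = (4:ℝ)^(-ν) / (2 * Real.Gamma (ν+1)) *
                ((16:ℝ)^β * (x/y)^β) * Real.Gamma β := by rw [f2]
          _ = (4:ℝ)^(-ν) / (2 * Real.Gamma (ν+1)) * (16^β * Real.Gamma β) * (x/y) ^ β := by
              ring
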